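/- If a trigonometric polynomial ψ(x,y) = Σ_{b∈B} c_b e^{2πi b·(x,y)} on ℝ² (B a finite set of frequencies in ℝ²) vanishes at every point of some circle in the plane, then ψ is identically zero. -/

import Mathlib

open Complex Real

open Filter

private lemma tendsto_cexp_mul_zero {z : ℂ} (hz : z.re < 0) :
    Tendsto (fun t : ℝ => Complex.exp (z * t)) atTop (nhds 0) := by
  rw [tendsto_zero_iff_norm_tendsto_zero]
  have h1 : ∀ t : ℝ, ‖Complex.exp (z * t)‖ = Real.exp (z.re * t) := by
    intro t
    rw [Complex.norm_exp]
    congr 1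
    simp [Complex.mul_re]
  simp only [h1]
  exact Real.tendsto_exp_atBot.comp (tendsto_id.const_mul_atTop_of_neg hz)

private lemma tendsto_cexp_div_one (z w : ℂ) :
    Tendsto (fun t : ℝ => Complex.exp (z / (t * w))) atTop (nhds 1) := by
  have h0 : Tendsto (fun t : ℝ => z / ((t : ℂ) * w)) atTop (nhds 0) := by
    have heq : (fun t : ℝ => z / ((t : ℂ) * w)) = fun t : ℝ => (z / w) * (((t⁻¹ : ℝ)) : ℂ) := by
      funext t
      push_cast
      rw [div_eq_mul_inv, mul_inv]
      ring
    rw [heq]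
    have h2 : Tendsto (fun t : ℝ => (((t⁻¹ : ℝ)) : ℂ)) atTop (nhds 0) := by
      have := (Complex.continuous_ofReal.tendsto 0).comp (tendsto_inv_atTop_zero (𝕜 := ℝ))
      simpa [Function.comp_def] using this
    simpa using h2.const_mul (z / w)
  have := (Complex.continuous_exp.tendsto 0).comp h0
  simpa [Function.comp_def] using this

private lemma key_exp_indep (w : ℂ) (hw : w ≠ 0) (d μ ν : ℝ × ℝ → ℂ) :
    ∀ B : Finset (ℝ × ℝ),
      (∀ b ∈ B, ∀ b' ∈ B, b ≠ b' → (μ b * w).re ≠ (μ b' * w).re) →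
      (∀ t : ℝ, 1 ≤ t → ∑ b ∈ B, d b * Complex.exp (μ b * (t * w) + ν b / (t * w)) = 0) →
      ∀ b ∈ B, d b = 0 := by
  intro B
  induction B using Finset.strongInduction with
  | _ B ih =>
    intro hinj hsum b hb
    obtain ⟨m, hm, hmax⟩ := Finset.exists_max_image B (fun b => (μ b * w).re) ⟨b, hb⟩
    have hdm : d m = 0 := by
      set f : ℝ → ℂ :=
        fun t => ∑ b ∈ B, d b * Complex.exp ((μ b - μ m) * (t * w) + ν b / (t * w)) with hf
      have hfzero : ∀ t : ℝ, 1 ≤ t → f t = 0 := by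
        intro t ht
        have hft : f t = Complex.exp (-(μ m * (t * w))) *
            ∑ b ∈ B, d b * Complex.exp (μ b * (t * w) + ν b / (t * w)) := by
          rw [hf, Finset.mul_sum]
          refine Finset.sum_congr rfl fun b _ => ?_
          rw [show (μ b - μ m) * (↑t * w) + ν b / (↑t * w)
              = -(μ m * (↑t * w)) + (μ b * (↑t * w) + ν b / (↑t * w)) from by ring,
            Complex.exp_add]
          ring
        rw [hft, hsum t ht, mul_zero]
      have hlim : Tendsto f atTop (nhds (d m)) := by
        have hterm : ∀ b ∈ B,
            Tendsto (fun t : ℝ => d b * Complex.exp ((μ b - μ m) * (t * w) + ν b / (t * w)))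
              atTop (nhds (if b = m then d b else 0)) := by
          intro b hb
          by_cases hbm : b = m
          · subst hbm
            simp only [sub_self, zero_mul, zero_add, if_true]
            have := (tendsto_cexp_div_one (ν b) w).const_mul (d b)
            simpa using this
          · simp only [hbm, if_false]
            have hre : ((μ b - μ m) * w).re < 0 := by
              have h1 : (μ b * w).re < (μ m * w).re :=
                lt_of_le_of_ne (hmax b hb) (hinj b hb m hm hbm)
              simp only [sub_mul, Complex.sub_re]
              linarith
            have h2 : Tendsto (fun t : ℝ => Complex.exp ((μ b - μ m) * (t * w))) atTop (nhds 0) := by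
              have heq : (fun t : ℝ => Complex.exp ((μ b - μ m) * ((t : ℂ) * w)))
                  = fun t : ℝ => Complex.exp (((μ b - μ m) * w) * t) := by
                funext t; congr 1; ring
              rw [heq]
              exact tendsto_cexp_mul_zero hre
            have h3 := (h2.mul (tendsto_cexp_div_one (ν b) w)).const_mul (d b)
            have heq2 : (fun t : ℝ => d b * (Complex.exp ((μ b - μ m) * (t * w)) *
                Complex.exp (ν b / (t * w))))
                = fun t : ℝ => d b * Complex.exp ((μ b - μ m) * (t * w) + ν b / (t * w)) := by
              funext t; rw [← Complex.exp_add]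
            rw [heq2] at h3
            simpa using h3
        have := tendsto_finset_sum B hterm
        rw [Finset.sum_ite_eq' B m d] at this
        simpa [hm] using this
      have hlim0 : Tendsto f atTop (nhds 0) := by
        have hev : f =ᶠ[atTop] (fun _ => (0 : ℂ)) := eventually_atTop.2 ⟨1, hfzero⟩
        exact Tendsto.congr' hev.symm tendsto_const_nhds
      exact tendsto_nhds_unique hlim hlim0
    rcases eq_or_ne b m with rfl | hbm
    · exact hdm
    · refine ih (B.erase m) (Finset.erase_ssubset hm)
        (fun x hx y hy => hinj x (Finset.mem_of_mem_erase hx) y (Finset.mem_of_mem_erase hy))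
        ?_ b (Finset.mem_erase.2 ⟨hbm, hb⟩)
      intro t ht
      have h := hsum t ht
      rw [← Finset.sum_erase_add B _ hm, hdm, zero_mul, add_zero] at h
      exact h

/-- A trigonometric polynomial on ℝ² vanishing on a circle is identically zero. -/
theorem trig_poly_vanishing_on_circle_eq_zero
    (B : Finset (ℝ × ℝ)) (c : ℝ × ℝ → ℂ) (center : ℝ × ℝ) (r : ℝ) (hr : 0 < r)
    (hvanish : ∀ x y : ℝ, (x - center.1) ^ 2 + (y - center.2) ^ 2 = r ^ 2 →
      ∑ b ∈ B, c b * Complex.exp (2 * Real.pi * Complex.I * (b.1 * x + b.2 * y)) = 0) :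
    ∀ x y : ℝ,
      ∑ b ∈ B, c b * Complex.exp (2 * Real.pi * Complex.I * (b.1 * x + b.2 * y)) = 0 := by
  have hπr : (0:ℝ) < π * r := mul_pos Real.pi_pos hr
  set μ : ℝ × ℝ → ℂ := fun b => ((π * r : ℝ) : ℂ) * ((b.2 : ℂ) + (b.1 : ℂ) * I) with hμ
  set ν : ℝ × ℝ → ℂ := fun b => -(((π * r : ℝ) : ℂ) * ((b.2 : ℂ) - (b.1 : ℂ) * I)) with hν
  set d : ℝ × ℝ → ℂ :=
    fun b => c b * Complex.exp (2 * Real.pi * Complex.I * (b.1 * center.1 + b.2 * center.2)) with hd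
  set F : ℂ → ℂ := fun u => ∑ b ∈ B, d b * Complex.exp (μ b * u + ν b / u) with hF
  -- F vanishes on the unit circle
  have hcirc : ∀ θ : ℝ, F (Complex.exp (θ * I)) = 0 := by
    intro θ
    have hxy : ((center.1 + r * Real.cos θ) - center.1) ^ 2
        + ((center.2 + r * Real.sin θ) - center.2) ^ 2 = r ^ 2 := by
      have h := Real.sin_sq_add_cos_sq θ
      nlinarith [h]
    have h0 := hvanish _ _ hxy
    rw [hF, ← h0]
    refine Finset.sum_congr rfl fun b _ => ?_
    have he : Complex.exp ((θ : ℂ) * I) = ((Real.cos θ : ℝ) : ℂ) + ((Real.sin θ : ℝ) : ℂ) * I := by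
      rw [Complex.exp_mul_I, ← Complex.ofReal_cos, ← Complex.ofReal_sin]
    have hei : (Complex.exp ((θ : ℂ) * I))⁻¹
        = ((Real.cos θ : ℝ) : ℂ) - ((Real.sin θ : ℝ) : ℂ) * I := by
      rw [← Complex.exp_neg, ← neg_mul, Complex.exp_mul_I, Complex.cos_neg, Complex.sin_neg,
        ← Complex.ofReal_cos, ← Complex.ofReal_sin]
      ring
    rw [hd, hμ, hν]
    simp only []
    rw [div_eq_mul_inv, hei, he, mul_assoc, ← Complex.exp_add]
    congr 2
    push_cast
    ring
  -- F is analytic on the right half-plane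
  have hopen : IsOpen {z : ℂ | 0 < z.re} := isOpen_lt continuous_const Complex.continuous_re
  have hne : ∀ u : ℂ, u ∈ {z : ℂ | 0 < z.re} → u ≠ 0 := by
    intro u hu h
    rw [h] at hu
    simp at hu
  have hdiff : DifferentiableOn ℂ F {z : ℂ | 0 < z.re} := by
    rw [hF]
    refine DifferentiableOn.fun_sum fun b _ => ?_
    refine (differentiableOn_const (d b)).mul ?_
    refine DifferentiableOn.cexp ?_
    exact ((differentiableOn_id.const_mul (μ b))).add
      (((differentiableOn_const (ν b)).div differentiableOn_id hne))
  have hEq : Set.EqOn F 0 {z : ℂ | 0 < z.re} := by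
    refine (hdiff.analyticOnNhd hopen).eqOn_zero_of_preconnected_of_frequently_eq_zero
      (convex_halfSpace_re_gt 0).isPreconnected (z₀ := 1) (by simp) ?_
    have hseq : Tendsto (fun n : ℕ => Complex.exp (((1 / (n + 1) : ℝ) : ℂ) * I)) atTop
        (nhdsWithin 1 {(1 : ℂ)}ᶜ) := by
      rw [tendsto_nhdsWithin_iff]
      constructor
      · have h1 : Tendsto (fun n : ℕ => ((1 / (n + 1) : ℝ) : ℂ) * I) atTop (nhds 0) := by
          have h2 := (Complex.continuous_ofReal.tendsto 0).comp
            tendsto_one_div_add_atTop_nhds_zero_nat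
          simpa [Function.comp_def] using h2.mul_const I
        have := (Complex.continuous_exp.tendsto 0).comp h1
        simpa [Function.comp_def] using this
      · filter_upwards with n
        have hpos : (0:ℝ) < 1 / (n + 1) := by positivity
        have hlt : (1 / (n + 1) : ℝ) < π := by
          have : (1 / (n + 1) : ℝ) ≤ 1 := by
            rw [div_le_one (by positivity)]
            linarith [Nat.cast_nonneg (α := ℝ) n]
          linarith [Real.pi_gt_three]
        have hsin : Real.sin (1 / (n + 1)) > 0 := Real.sin_pos_of_pos_of_lt_pi hpos hlt
        intro hmem
        have him : (Complex.exp (((1 / (n + 1) : ℝ) : ℂ) * I)).im = Real.sin (1 / (n + 1)) :=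
          Complex.exp_ofReal_mul_I_im _
        rw [hmem] at him
        simp at him
        rw [one_div] at hsin
        linarith
    exact hseq.frequently (Frequently.of_forall fun n => hcirc _)
  -- choose a generic direction
  obtain ⟨q, hq⟩ := Infinite.exists_notMem_finset
    ((B ×ˢ B).image fun p : (ℝ × ℝ) × (ℝ × ℝ) => (p.1.2 - p.2.2) / (p.1.1 - p.2.1))
  set w : ℂ := 1 + (q : ℂ) * I with hwdef
  have hw : w ≠ 0 := by
    intro h
    have : w.re = 0 := by rw [h]; simp
    rw [hwdef] at this
    simp at this
  have hre : ∀ b : ℝ × ℝ, (μ b * w).re = π * r * (b.2 - b.1 * q) := by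
    intro b
    rw [hμ, hwdef]
    simp [Complex.mul_re, Complex.mul_im, Complex.add_re, Complex.add_im]
    ring
  have hinj : ∀ b ∈ B, ∀ b' ∈ B, b ≠ b' → (μ b * w).re ≠ (μ b' * w).re := by
    intro b hb b' hb' hne' heq
    rw [hre, hre] at heq
    have heq2 : b.2 - b.1 * q = b'.2 - b'.1 * q := by
      have := mul_left_cancel₀ (ne_of_gt hπr) heq
      exact this
    by_cases hb1 : b.1 = b'.1
    · have hb2 : b.2 = b'.2 := by
        rw [hb1] at heq2; linarith
      exact hne' (Prod.ext hb1 hb2)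
    · apply hq
      rw [Finset.mem_image]
      refine ⟨(b, b'), Finset.mem_product.2 ⟨hb, hb'⟩, ?_⟩
      show (b.2 - b'.2) / (b.1 - b'.1) = q
      rw [div_eq_iff (sub_ne_zero.2 hb1)]
      linarith [heq2]
  have hsum : ∀ t : ℝ, 1 ≤ t →
      ∑ b ∈ B, d b * Complex.exp (μ b * (t * w) + ν b / (t * w)) = 0 := by
    intro t ht
    have hmem : ((t : ℂ) * w) ∈ {z : ℂ | 0 < z.re} := by
      have : ((t : ℂ) * w).re = t * w.re := by
        simp [Complex.mul_re]
      rw [Set.mem_setOf_eq, this, hwdef]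
      simp
      linarith
    have := hEq hmem
    rw [hF] at this
    simpa using this
  have hkey := key_exp_indep w hw d μ ν B hinj hsum
  intro x y
  refine Finset.sum_eq_zero fun b hb => ?_
  have hdb := hkey b hb
  rw [hd] at hdb
  simp only [] at hdb
  rcases mul_eq_zero.1 hdb with h | h
  · rw [h, zero_mul]
  · exact absurd h (Complex.exp_ne_zero _)
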